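/- Let (P,·,[−,−]) be a Poisson algebra and (B,∘_B) a perm algebra. Then the tensor product P⊗B, equipped with the bilinear operations determined on pure tensors by (p⊗b)∘(q⊗c) = (p·q)⊗(b∘_B c) and (p⊗b)∗(q⊗c) = [p,q]⊗(b∘_B c), is a dual pre-Poisson algebra. -/

import Mathlib

open TensorProduct LinearMap

/-- The axioms of a dual pre-Poisson (DPP) algebra. -/
structure IsDPP {k A : Type*} [Field k] [AddCommGroup A] [Module k A]
    (c s : A →ₗ[k] A →ₗ[k] A) : Prop where
  perm_assoc : ∀ a b d : A, c a (c b d) = c (c a b) d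
  perm_comm : ∀ a b d : A, c (c a b) d = c (c b a) d
  leibniz : ∀ a b d : A, s a (s b d) = s (s a b) d + s b (s a d)
  comp1 : ∀ a b d : A, s (c a b) d = c a (s b d) + c b (s a d)
  comp2 : ∀ a b d : A, c (s a b) d = s a (c b d) - c b (s a d)
  comp3 : ∀ a b d : A, c (s a b) d = - c (s b a) d

/-- The axioms of a (not necessarily unital) Poisson algebra. -/
structure IsPoisson {k P : Type*} [Field k] [AddCommGroup P] [Module k P]
    (m br : P →ₗ[k] P →ₗ[k] P) : Prop where
  mul_comm : ∀ p q : P, m p q = m q p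
  mul_assoc : ∀ p q u : P, m p (m q u) = m (m p q) u
  br_antisymm : ∀ p q : P, br p q = - br q p
  jacobi : ∀ p q u : P, br p (br q u) + br q (br u p) + br u (br p q) = 0
  leibniz : ∀ p q u : P, br p (m q u) = m (br p q) u + m q (br p u)

/-- The tensor product of a Poisson algebra `(P, ·, [−,−])` and a perm algebra
`(B, ∘_B)`, equipped with the operations determined on pure tensors by
`(p⊗b)∘(q⊗c) = (p·q)⊗(b∘_B c)` and `(p⊗b)∗(q⊗c) = [p,q]⊗(b∘_B c)`,
is a dual pre-Poisson algebra. -/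
theorem stmt6 {k P B : Type*} [Field k] [CharZero k]
    [AddCommGroup P] [Module k P] [AddCommGroup B] [Module k B]
    (m br : P →ₗ[k] P →ₗ[k] P) (hP : IsPoisson m br)
    (cB : B →ₗ[k] B →ₗ[k] B)
    (hB : ∀ b c d : B, cB b (cB c d) = cB (cB b c) d ∧ cB (cB b c) d = cB (cB c b) d)
    (circ star : P ⊗[k] B →ₗ[k] P ⊗[k] B →ₗ[k] P ⊗[k] B)
    (hcirc : ∀ (p q : P) (b c : B),
      circ (p ⊗ₜ[k] b) (q ⊗ₜ[k] c) = (m p q) ⊗ₜ[k] (cB b c))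
    (hstar : ∀ (p q : P) (b c : B),
      star (p ⊗ₜ[k] b) (q ⊗ₜ[k] c) = (br p q) ⊗ₜ[k] (cB b c)) :
    IsDPP circ star := by
  have hB1 : ∀ b c d : B, cB b (cB c d) = cB (cB b c) d := fun b c d => (hB b c d).1
  have hB2 : ∀ b c d : B, cB (cB b c) d = cB (cB c b) d := fun b c d => (hB b c d).2
  have hB3 : ∀ b c d : B, cB b (cB c d) = cB c (cB b d) := fun b c d => by
    rw [hB1, hB2, ← hB1]
  -- derived Poisson identities
  have hbr : ∀ p q u : P, br p (br q u) = br (br p q) u + br q (br p u) := by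
    intro p q u
    have j := hP.jacobi p q u
    rw [hP.br_antisymm u p, map_neg, hP.br_antisymm u (br p q)] at j
    refine eq_of_sub_eq_zero ?_
    rw [show br p (br q u) - (br (br p q) u + br q (br p u))
        = br p (br q u) + -(br q (br p u)) + -(br (br p q) u) from by abel]
    exact j
  have hbm : ∀ p q u : P, br (m p q) u = m p (br q u) + m q (br p u) := by
    intro p q u
    rw [hP.br_antisymm (m p q) u, hP.leibniz u p q, hP.br_antisymm u p,
      hP.br_antisymm u q]
    simp only [map_neg, LinearMap.neg_apply, neg_add, neg_neg]
    rw [hP.mul_comm (br p u) q]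
    abel
  constructor
  · intro a b d
    induction a using TensorProduct.induction_on with
    | zero => simp
    | tmul p x =>
      induction b using TensorProduct.induction_on with
      | zero => simp
      | tmul q y =>
        induction d using TensorProduct.induction_on with
        | zero => simp
        | tmul u z => rw [hcirc, hcirc, hcirc, hcirc, hP.mul_assoc, hB1]
        | add d1 d2 h1 h2 => simp only [map_add, h1, h2]
      | add b1 b2 h1 h2 => simp only [map_add, LinearMap.add_apply, h1, h2]
    | add a1 a2 h1 h2 => simp only [map_add, LinearMap.add_apply, h1, h2]
  · intro a b d
    induction a using TensorProduct.induction_on with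
    | zero => simp
    | tmul p x =>
      induction b using TensorProduct.induction_on with
      | zero => simp
      | tmul q y =>
        induction d using TensorProduct.induction_on with
        | zero => simp
        | tmul u z =>
          rw [hcirc, hcirc, hcirc, hcirc, hP.mul_comm p q, hB2]
        | add d1 d2 h1 h2 => simp only [map_add, h1, h2]
      | add b1 b2 h1 h2 => simp only [map_add, LinearMap.add_apply, h1, h2]
    | add a1 a2 h1 h2 => simp only [map_add, LinearMap.add_apply, h1, h2]
  · intro a b d
    induction a using TensorProduct.induction_on with
    | zero => simp
    | tmul p x =>
      induction b using TensorProduct.induction_on with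
      | zero => simp
      | tmul q y =>
        induction d using TensorProduct.induction_on with
        | zero => simp
        | tmul u z =>
          rw [hstar, hstar, hstar, hstar, hstar, hstar, hbr p q u,
            hB1 x y z, hB3 y x z, hB1 x y z, add_tmul]
        | add d1 d2 h1 h2 => simp only [map_add, h1, h2]; abel
      | add b1 b2 h1 h2 => simp only [map_add, LinearMap.add_apply, h1, h2]; abel
    | add a1 a2 h1 h2 => simp only [map_add, LinearMap.add_apply, h1, h2]; abel
  · intro a b d
    induction a using TensorProduct.induction_on with
    | zero => simp
    | tmul p x =>
      induction b using TensorProduct.induction_on with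
      | zero => simp
      | tmul q y =>
        induction d using TensorProduct.induction_on with
        | zero => simp
        | tmul u z =>
          rw [hcirc, hstar, hstar, hcirc, hstar, hcirc, hbm p q u,
            hB1 x y z, hB3 y x z, hB1 x y z, add_tmul]
        | add d1 d2 h1 h2 => simp only [map_add, h1, h2]; abel
      | add b1 b2 h1 h2 => simp only [map_add, LinearMap.add_apply, h1, h2]; abel
    | add a1 a2 h1 h2 => simp only [map_add, LinearMap.add_apply, h1, h2]; abel
  · intro a b d
    induction a using TensorProduct.induction_on with
    | zero => simp
    | tmul p x =>
      induction b using TensorProduct.induction_on with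
      | zero => simp
      | tmul q y =>
        induction d using TensorProduct.induction_on with
        | zero => simp
        | tmul u z =>
          rw [hstar, hcirc, hcirc, hstar, hstar, hcirc, hP.leibniz p q u,
            hB1 x y z, hB3 y x z, hB1 x y z, add_tmul]
          abel
        | add d1 d2 h1 h2 => simp only [map_add, h1, h2]; abel
      | add b1 b2 h1 h2 => simp only [map_add, LinearMap.add_apply, h1, h2]; abel
    | add a1 a2 h1 h2 => simp only [map_add, LinearMap.add_apply, h1, h2]; abel
  · intro a b d
    induction a using TensorProduct.induction_on with
    | zero => simp
    | tmul p x =>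
      induction b using TensorProduct.induction_on with
      | zero => simp
      | tmul q y =>
        induction d using TensorProduct.induction_on with
        | zero => simp
        | tmul u z =>
          rw [hstar, hcirc, hstar, hcirc, hP.br_antisymm p q, hB2 x y z,
            map_neg, LinearMap.neg_apply, neg_tmul]
        | add d1 d2 h1 h2 => simp only [map_add, h1, h2]; abel
      | add b1 b2 h1 h2 => simp only [map_add, LinearMap.add_apply, h1, h2]; abel
    | add a1 a2 h1 h2 => simp only [map_add, LinearMap.add_apply, h1, h2]; abel
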